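/- Let m ≥ 2 be an integer, A an abelian group generated by the image of a non-constant map Φ : ℤ_m → A with Φ(0) = 0, and let S ∈ A. Then the operation (a,x)·(b,y) = (b+1, y + χ₀(b)·S + Φ(b−a)) on X = ℤ_m × A defines an indecomposable cycle set. Moreover, given a second such datum (B, Φ′ : ℤ_m → B non-constant with Φ′(0)=0 and B generated by the image of Φ′, S′ ∈ B), the two resulting cycle sets are isomorphic if and only if there exists a group isomorphism f : A → B with Φ′ = f∘Φ and f(S) = S′. -/

import Mathlib

/-- A (non-degenerate) cycle set: a set with a binary operation satisfying
(C1) `(x·y)·(x·z) = (y·x)·(y·z)`, (C2) each left translation is bijective and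
(C3) the square map `x ↦ x·x` is bijective. -/
structure CycleSet (X : Type*) where
  op : X → X → X
  c1 : ∀ x y z : X, op (op x y) (op x z) = op (op y x) (op y z)
  c2 : ∀ x : X, Function.Bijective (op x)
  c3 : Function.Bijective (fun x : X => op x x)

namespace CycleSet

variable {X Y : Type*}

/-- The permutation `σ_x : y ↦ x·y`. -/
noncomputable def sigma (C : CycleSet X) (x : X) : Equiv.Perm X :=
  Equiv.ofBijective (C.op x) (C.c2 x)

/-- The permutation group `𝒢(X)` generated by all `σ_x`. -/
noncomputable def permGroup (C : CycleSet X) : Subgroup (Equiv.Perm X) :=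
  Subgroup.closure (Set.range C.sigma)

/-- A cycle set is indecomposable if `𝒢(X)` acts transitively on `X`. -/
def Indecomposable (C : CycleSet X) : Prop :=
  ∀ x y : X, ∃ g ∈ C.permGroup, g x = y

/-- A cycle set is irretractable if `σ_x = σ_y` implies `x = y`. -/
def Irretractable (C : CycleSet X) : Prop :=
  ∀ x y : X, C.op x = C.op y → x = y

/-- `f` is an isomorphism of cycle sets from `C` to `D`. -/
def IsIso (C : CycleSet X) (D : CycleSet Y) (f : X → Y) : Prop :=
  Function.Bijective f ∧ ∀ x y : X, f (C.op x y) = D.op (f x) (f y)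

/-- Two cycle sets are isomorphic if there is an isomorphism between them. -/
def Iso (C : CycleSet X) (D : CycleSet Y) : Prop :=
  ∃ f : X → Y, C.IsIso D f

end CycleSet

section Helpers

variable {m : ℕ} {A B : Type*} [AddCommGroup A] [AddCommGroup B]

private def cop (Φ : ZMod m → A) (S : A) (p q : ZMod m × A) : ZMod m × A :=
  (q.1 + 1, q.2 + (if q.1 = 0 then S else 0) + Φ (q.1 - p.1))

private noncomputable def mkCS (Φ : ZMod m → A) (hΦ0 : Φ 0 = 0) (S : A) :
    CycleSet (ZMod m × A) where
  op := cop Φ S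
  c1 := by
    intro p q r
    simp only [cop, Prod.mk.injEq]
    refine ⟨trivial, ?_⟩
    rw [add_sub_add_right_eq_sub, add_sub_add_right_eq_sub]
    abel_nf
    exact congrArg (r.2 + ·) (congrArg (_ + ·) (congrArg (_ + ·) (add_comm _ _)))
  c2 := by
    intro p
    constructor
    · rintro ⟨b, y⟩ ⟨b', y'⟩ h
      simp only [cop, Prod.mk.injEq] at h
      obtain ⟨h1, h2⟩ := h
      obtain rfl : b = b' := add_right_cancel h1
      obtain rfl : y = y' := add_right_cancel (add_right_cancel h2)
      rfl
    · rintro ⟨b, y⟩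
      refine ⟨(b - 1, y - Φ (b - 1 - p.1) - (if b - 1 = 0 then S else 0)), ?_⟩
      simp only [cop, Prod.mk.injEq]
      exact ⟨sub_add_cancel b 1, by abel⟩
  c3 := by
    constructor
    · rintro ⟨a, x⟩ ⟨a', x'⟩ h
      simp only [cop, Prod.mk.injEq] at h
      obtain ⟨h1, h2⟩ := h
      obtain rfl : a = a' := add_right_cancel h1
      obtain rfl : x = x' := add_right_cancel (add_right_cancel h2)
      rfl
    · rintro ⟨b, y⟩
      refine ⟨(b - 1, y - (if b - 1 = 0 then S else 0)), ?_⟩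
      simp only [cop, Prod.mk.injEq, sub_self, hΦ0]
      exact ⟨sub_add_cancel b 1, by abel⟩

private lemma indec [NeZero m]
    (Φ : ZMod m → A) (hΦ0 : Φ 0 = 0)
    (hgen : AddSubgroup.closure (Set.range Φ) = (⊤ : AddSubgroup A)) (S : A)
    (C : CycleSet (ZMod m × A))
    (hC : ∀ (a b : ZMod m) (x y : A),
      C.op (a, x) (b, y) = (b + 1, y + (if b = 0 then S else 0) + Φ (b - a))) :
    C.Indecomposable := by
  have hsig : ∀ p : ZMod m × A, C.sigma p ∈ C.permGroup :=
    fun p => Subgroup.subset_closure ⟨p, rfl⟩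
  have hsapp : ∀ p q : ZMod m × A, C.sigma p q = C.op p q := fun p q => rfl
  have step1 : ∀ k : ℕ, ∀ (a : ZMod m) (x : A),
      ∃ g ∈ C.permGroup, ∃ x', g (a, x) = (a + (k : ZMod m), x') := by
    intro k
    induction k with
    | zero => intro a x; exact ⟨1, one_mem _, x, by simp⟩
    | succ k ih =>
      intro a x
      obtain ⟨g, hg, x', hgx⟩ := ih a x
      refine ⟨C.sigma (0, 0) * g, mul_mem (hsig _) hg,
        x' + (if a + (k : ZMod m) = 0 then S else 0) + Φ (a + (k : ZMod m) - 0), ?_⟩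
      have h1 : (C.sigma (0, 0) * g) (a, x) = C.op (0, 0) (a + (k : ZMod m), x') := by
        rw [Equiv.Perm.mul_apply, hgx, hsapp]
      rw [h1, hC]
      have hcast : (a + ((k + 1 : ℕ) : ZMod m)) = a + (k : ZMod m) + 1 := by push_cast; ring
      rw [hcast]
  have step2 : ∀ (b₀ : ZMod m) (z : A),
      ∃ g ∈ C.permGroup, ∀ y : A, g (b₀, y) = (b₀, y + z) := by
    intro b₀ z
    have hz : z ∈ AddSubgroup.closure (Set.range Φ) := by rw [hgen]; trivial
    induction hz using AddSubgroup.closure_induction with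
    | mem d hd =>
      obtain ⟨t, rfl⟩ := hd
      refine ⟨(C.sigma (b₀, 0))⁻¹ * C.sigma (b₀ - t, 0),
        mul_mem (inv_mem (hsig _)) (hsig _), ?_⟩
      intro y
      have h1 : C.sigma (b₀ - t, 0) (b₀, y)
          = (b₀ + 1, y + (if b₀ = 0 then S else 0) + Φ t) := by
        rw [hsapp, hC]
        congr 2
        ring
      have h2 : C.sigma (b₀, 0) (b₀, y + Φ t)
          = (b₀ + 1, y + (if b₀ = 0 then S else 0) + Φ t) := by
        rw [hsapp, hC, sub_self, hΦ0]
        congr 1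
        abel
      rw [Equiv.Perm.mul_apply, h1, ← h2, Equiv.Perm.inv_def, Equiv.symm_apply_apply]
    | zero => exact ⟨1, one_mem _, fun y => by simp⟩
    | add d d' _ _ ihd ihd' =>
      obtain ⟨g1, hg1, h1⟩ := ihd
      obtain ⟨g2, hg2, h2⟩ := ihd'
      refine ⟨g2 * g1, mul_mem hg2 hg1, fun y => ?_⟩
      rw [Equiv.Perm.mul_apply, h1, h2, add_assoc]
    | neg d _ ihd =>
      obtain ⟨g, hg, h⟩ := ihd
      refine ⟨g⁻¹, inv_mem hg, fun y => ?_⟩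
      have h1 : g (b₀, y + -d) = (b₀, y) := by
        rw [h, neg_add_cancel_right]
      rw [← h1, Equiv.Perm.inv_def, Equiv.symm_apply_apply]
  rintro ⟨a, x⟩ ⟨b, y⟩
  obtain ⟨g1, hg1, x', hgx⟩ := step1 (b - a).val a x
  have hb : a + (((b - a).val : ℕ) : ZMod m) = b := by
    rw [ZMod.natCast_rightInverse (b - a)]
    ring
  rw [hb] at hgx
  obtain ⟨g2, hg2, h2⟩ := step2 b (y - x')
  refine ⟨g2 * g1, mul_mem hg2 hg1, ?_⟩
  rw [Equiv.Perm.mul_apply, hgx, h2, add_sub_cancel]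

private lemma iso_backward [NeZero m]
    (Φ : ZMod m → A) (S : A) (Φ' : ZMod m → B) (S' : B)
    (C : CycleSet (ZMod m × A)) (D : CycleSet (ZMod m × B))
    (hC : ∀ (a b : ZMod m) (x y : A),
      C.op (a, x) (b, y) = (b + 1, y + (if b = 0 then S else 0) + Φ (b - a)))
    (hD : ∀ (a b : ZMod m) (x y : B),
      D.op (a, x) (b, y) = (b + 1, y + (if b = 0 then S' else 0) + Φ' (b - a)))
    (f : A ≃+ B) (hfΦ : ∀ i : ZMod m, Φ' i = f (Φ i)) (hfS : f S = S') :
    C.Iso D := by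
  refine ⟨fun p => (p.1, f p.2), ⟨?_, ?_⟩, ?_⟩
  · rintro ⟨a, x⟩ ⟨a', x'⟩ h
    simp only [Prod.mk.injEq] at h
    exact Prod.ext h.1 (f.injective h.2)
  · rintro ⟨b, y⟩
    exact ⟨(b, f.symm y), by simp⟩
  · rintro ⟨a, x⟩ ⟨b, y⟩
    simp only [hC, hD]
    simp [map_add, hfΦ, apply_ite f, hfS]

private lemma iso_forward [NeZero m]
    (Φ : ZMod m → A) (hΦ0 : Φ 0 = 0)
    (hgen : AddSubgroup.closure (Set.range Φ) = (⊤ : AddSubgroup A)) (S : A)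
    (Φ' : ZMod m → B) (hΦ'0 : Φ' 0 = 0) (S' : B)
    (C : CycleSet (ZMod m × A)) (D : CycleSet (ZMod m × B))
    (hC : ∀ (a b : ZMod m) (x y : A),
      C.op (a, x) (b, y) = (b + 1, y + (if b = 0 then S else 0) + Φ (b - a)))
    (hD : ∀ (a b : ZMod m) (x y : B),
      D.op (a, x) (b, y) = (b + 1, y + (if b = 0 then S' else 0) + Φ' (b - a)))
    (h : C.Iso D) :
    ∃ f : A ≃+ B, (∀ i : ZMod m, Φ' i = f (Φ i)) ∧ f S = S' := by
  obtain ⟨F, Fbij, Fhom⟩ := h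
  have hD' : ∀ p q : ZMod m × B,
      D.op p q = (q.1 + 1, q.2 + (if q.1 = 0 then S' else 0) + Φ' (q.1 - p.1)) := by
    rintro ⟨a, x⟩ ⟨b, y⟩; exact hD a b x y
  have hGmem : ∀ z : A, z ∈ AddSubgroup.closure (Set.range Φ) := by
    intro z; rw [hgen]; trivial
  -- master relation
  have hR : ∀ (a b : ZMod m) (x y : A),
      F (b + 1, y + (if b = 0 then S else 0) + Φ (b - a))
        = ((F (b, y)).1 + 1, (F (b, y)).2 + (if (F (b, y)).1 = 0 then S' else 0)
            + Φ' ((F (b, y)).1 - (F (a, x)).1)) := by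
    intro a b x y
    rw [← hC a b x y, Fhom, hD']
  have hR1 : ∀ (a b : ZMod m) (x y : A),
      (F (b + 1, y + (if b = 0 then S else 0) + Φ (b - a))).1 = (F (b, y)).1 + 1 :=
    fun a b x y => congrArg Prod.fst (hR a b x y)
  -- cleaned first-coordinate relation
  have hR1' : ∀ (t c0 : ZMod m) (w : A),
      (F (c0, w + Φ t)).1
        = (F (c0 - 1, w - (if c0 - 1 = 0 then S else 0))).1 + 1 := by
    intro t c0 w
    have e := hR1 (c0 - 1 - t) (c0 - 1) 0 (w - (if c0 - 1 = 0 then S else 0))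
    rw [sub_add_cancel, sub_add_cancel, sub_sub_cancel] at e
    exact e
  -- first coordinate does not depend on the A-component
  have hG1const : ∀ (d : A) (c0 : ZMod m) (w : A),
      (F (c0, w + d)).1 = (F (c0, w)).1 := by
    intro d
    induction hGmem d using AddSubgroup.closure_induction with
    | mem t ht =>
      obtain ⟨s, rfl⟩ := ht
      intro c0 w
      have e0 := hR1' 0 c0 w
      rw [hΦ0, add_zero] at e0
      rw [hR1' s c0 w, ← e0]
    | zero => intro c0 w; rw [add_zero]
    | add x y _ _ ihx ihy =>
      intro c0 w
      rw [← add_assoc, ihy c0 (w + x), ihx c0 w]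
    | neg x _ ihx =>
      intro c0 w
      have e := ihx c0 (w + -x)
      rw [neg_add_cancel_right] at e
      exact e.symm
  have hfib : ∀ (c0 : ZMod m) (w : A), (F (c0, w)).1 = (F (c0, (0 : A))).1 := by
    intro c0 w
    have := hG1const w c0 0
    rwa [zero_add] at this
  -- the first coordinate is linear
  have hstep : ∀ b : ZMod m, (F (b + 1, (0 : A))).1 = (F (b, (0 : A))).1 + 1 := by
    intro b
    have e := hR1 b b 0 0
    rw [hfib (b + 1) (0 + (if b = 0 then S else 0) + Φ (b - b))] at e
    exact e
  have hlin : ∀ (b : ZMod m) (x : A),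
      (F (b, x)).1 = b + (F ((0 : ZMod m), (0 : A))).1 := by
    have hk : ∀ k : ℕ, (F ((k : ZMod m), (0 : A))).1
        = (k : ZMod m) + (F ((0 : ZMod m), (0 : A))).1 := by
      intro k
      induction k with
      | zero => simp
      | succ k ih =>
        have hc : ((k + 1 : ℕ) : ZMod m) = (k : ZMod m) + 1 := by push_cast; ring
        rw [hc, hstep, ih]; ring
    intro b x
    rw [hfib b x]
    have := hk b.val
    rwa [ZMod.natCast_rightInverse b] at this
  -- cleaned second-coordinate relation
  have hR2' : ∀ (a b : ZMod m) (y : A),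
      (F (b + 1, y + (if b = 0 then S else 0) + Φ (b - a))).2
        = (F (b, y)).2
          + (if b + (F ((0 : ZMod m), (0 : A))).1 = 0 then S' else 0) + Φ' (b - a) := by
    intro a b y
    have e := congrArg Prod.snd (hR a b 0 y)
    rw [hlin b y, hlin a 0] at e
    rw [add_sub_add_right_eq_sub] at e
    exact e
  have hHadd1 : ∀ (t c0 : ZMod m) (z : A),
      (F (c0, z + Φ t)).2 = (F (c0, z)).2 + Φ' t := by
    intro t c0 z
    have e1 := hR2' (c0 - 1 - t) (c0 - 1) (z - (if c0 - 1 = 0 then S else 0))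
    have e2 := hR2' (c0 - 1) (c0 - 1) (z - (if c0 - 1 = 0 then S else 0))
    rw [sub_add_cancel, sub_add_cancel, sub_sub_cancel] at e1
    rw [sub_add_cancel, sub_add_cancel, sub_self, hΦ0, add_zero, hΦ'0, add_zero] at e2
    rw [e1, e2]
  -- existence of uniform increments
  have hQ : ∀ d : A, ∃ w : B, ∀ (c0 : ZMod m) (z : A),
      (F (c0, z + d)).2 = (F (c0, z)).2 + w := by
    intro d
    induction hGmem d using AddSubgroup.closure_induction with
    | mem t ht =>
      obtain ⟨s, rfl⟩ := ht
      exact ⟨Φ' s, fun c0 z => hHadd1 s c0 z⟩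
    | zero => exact ⟨0, fun c0 z => by rw [add_zero, add_zero]⟩
    | add x y _ _ ihx ihy =>
      obtain ⟨w1, h1⟩ := ihx
      obtain ⟨w2, h2⟩ := ihy
      refine ⟨w1 + w2, fun c0 z => ?_⟩
      rw [← add_assoc, h2 c0 (z + x), h1 c0 z, add_assoc]
    | neg x _ ihx =>
      obtain ⟨w, hw⟩ := ihx
      refine ⟨-w, fun c0 z => ?_⟩
      have e := hw c0 (z + -x)
      rw [neg_add_cancel_right] at e
      rw [e]
      abel
  have hHadd : ∀ (d : A) (c0 : ZMod m) (z : A),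
      (F (c0, z + d)).2
        = (F (c0, z)).2 + ((F ((0 : ZMod m), d)).2 - (F ((0 : ZMod m), (0 : A))).2) := by
    intro d c0 z
    obtain ⟨w, hw⟩ := hQ d
    have h0 := hw 0 0
    rw [zero_add] at h0
    rw [hw c0 z, h0]
    abel
  -- the additive map
  have f0add : ∀ d e : A,
      (F ((0 : ZMod m), d + e)).2 - (F ((0 : ZMod m), (0 : A))).2
        = ((F ((0 : ZMod m), d)).2 - (F ((0 : ZMod m), (0 : A))).2)
          + ((F ((0 : ZMod m), e)).2 - (F ((0 : ZMod m), (0 : A))).2) := by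
    intro d e
    rw [hHadd e 0 d]
    abel
  have f0Φ : ∀ t : ZMod m,
      (F ((0 : ZMod m), Φ t)).2 - (F ((0 : ZMod m), (0 : A))).2 = Φ' t := by
    intro t
    have e := hHadd1 t 0 0
    rw [zero_add] at e
    rw [e]
    abel
  set fh : A →+ B := AddMonoidHom.mk'
    (fun d => (F ((0 : ZMod m), d)).2 - (F ((0 : ZMod m), (0 : A))).2) f0add with hfh
  have fhapp : ∀ d : A,
      fh d = (F ((0 : ZMod m), d)).2 - (F ((0 : ZMod m), (0 : A))).2 := fun d => rfl
  have fhinj : Function.Injective fh := by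
    intro d d' hdd
    rw [fhapp, fhapp] at hdd
    have h2 : (F ((0 : ZMod m), d)).2 = (F ((0 : ZMod m), d')).2 := by
      exact sub_left_inj.mp hdd
    have h1 : (F ((0 : ZMod m), d)).1 = (F ((0 : ZMod m), d')).1 := by
      rw [hfib 0 d, hfib 0 d']
    have := Fbij.1 (Prod.ext h1 h2)
    exact congrArg Prod.snd this
  have fhsurj : Function.Surjective fh := by
    intro w
    obtain ⟨⟨a0, x0⟩, hp⟩ := Fbij.2
      ((F ((0 : ZMod m), (0 : A))).1, w + (F ((0 : ZMod m), (0 : A))).2)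
    have h1 : (F (a0, x0)).1 = (F ((0 : ZMod m), (0 : A))).1 := by rw [hp]
    rw [hlin a0 x0] at h1
    have ha0 : a0 = 0 := by
      have := h1
      nth_rewrite 2 [show (F ((0 : ZMod m), (0 : A))).1
        = 0 + (F ((0 : ZMod m), (0 : A))).1 by rw [zero_add]] at this
      exact add_right_cancel this
    subst ha0
    have h2 : (F ((0 : ZMod m), x0)).2 = w + (F ((0 : ZMod m), (0 : A))).2 := by
      rw [hp]
    exact ⟨x0, by rw [fhapp, h2]; abel⟩
  have hbij : Function.Bijective fh := ⟨fhinj, fhsurj⟩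
  refine ⟨AddEquiv.ofBijective fh hbij, ?_, ?_⟩
  · intro i
    have : (AddEquiv.ofBijective fh hbij) (Φ i) = fh (Φ i) := rfl
    rw [this, fhapp, f0Φ]
  · -- f S = S'
    have fh0 : fh (0 : A) = 0 := map_zero fh
    have key : ∀ b : ZMod m,
        (F (b + 1, (0 : A))).2 + fh (if b = 0 then S else 0)
          = (F (b, (0 : A))).2
            + (if b + (F ((0 : ZMod m), (0 : A))).1 = 0 then S' else 0) := by
      intro b
      have e := hR2' b b 0
      rw [sub_self, hΦ0, add_zero, hΦ'0, add_zero, zero_add] at e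
      have e2 := hHadd (if b = 0 then S else 0) (b + 1) 0
      rw [zero_add] at e2
      rw [e2] at e
      rw [← fhapp] at e
      exact e
    have hsum := Finset.sum_congr rfl (fun b (_ : b ∈ Finset.univ) => key b)
    rw [Finset.sum_add_distrib, Finset.sum_add_distrib] at hsum
    have h5 : ∑ b : ZMod m, (F (b + 1, (0 : A))).2 = ∑ b : ZMod m, (F (b, (0 : A))).2 :=
      Fintype.sum_equiv (Equiv.addRight 1) _ _ (fun b => by simp)
    have h6 : ∑ b : ZMod m, fh (if b = 0 then S else 0) = fh S := by
      have he : ∀ b : ZMod m, fh (if b = 0 then S else 0)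
          = if b = 0 then fh S else 0 := by
        intro b; split <;> simp [fh0]
      rw [Finset.sum_congr rfl (fun b _ => he b)]
      exact Fintype.sum_ite_eq' 0 (fun _ => fh S)
    have h7 : ∑ b : ZMod m,
        (if b + (F ((0 : ZMod m), (0 : A))).1 = 0 then S' else 0) = S' := by
      rw [Fintype.sum_equiv (Equiv.addRight (F ((0 : ZMod m), (0 : A))).1)
        (fun b => if b + (F ((0 : ZMod m), (0 : A))).1 = 0 then S' else 0)
        (fun b => if b = 0 then S' else 0) (fun b => by simp; rfl)]
      exact Fintype.sum_ite_eq' 0 (fun _ => S')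
    rw [h5, h6, h7] at hsum
    have : fh S = S' := add_left_cancel hsum
    rw [← this]
    rfl

end Helpers

theorem stmt7 {m : ℕ} (hm : 2 ≤ m) {A B : Type*} [AddCommGroup A] [AddCommGroup B]
    (Φ : ZMod m → A) (hΦ0 : Φ 0 = 0) (hΦnc : ∃ i j : ZMod m, Φ i ≠ Φ j)
    (hgen : AddSubgroup.closure (Set.range Φ) = (⊤ : AddSubgroup A)) (S : A)
    (Φ' : ZMod m → B) (hΦ'0 : Φ' 0 = 0) (hΦ'nc : ∃ i j : ZMod m, Φ' i ≠ Φ' j)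
    (hgen' : AddSubgroup.closure (Set.range Φ') = (⊤ : AddSubgroup B)) (S' : B) :
    (∃ C : CycleSet (ZMod m × A),
      (∀ (a b : ZMod m) (x y : A),
        C.op (a, x) (b, y) = (b + 1, y + (if b = 0 then S else 0) + Φ (b - a))) ∧
      C.Indecomposable) ∧
    (∀ (C : CycleSet (ZMod m × A)) (D : CycleSet (ZMod m × B)),
      (∀ (a b : ZMod m) (x y : A),
        C.op (a, x) (b, y) = (b + 1, y + (if b = 0 then S else 0) + Φ (b - a))) →
      (∀ (a b : ZMod m) (x y : B),
        D.op (a, x) (b, y) = (b + 1, y + (if b = 0 then S' else 0) + Φ' (b - a))) →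
      (C.Iso D ↔ ∃ f : A ≃+ B, (∀ i : ZMod m, Φ' i = f (Φ i)) ∧ f S = S')) := by
  haveI : NeZero m := ⟨by omega⟩
  constructor
  · refine ⟨mkCS Φ hΦ0 S, fun a b x y => rfl, ?_⟩
    exact indec Φ hΦ0 hgen S _ (fun a b x y => rfl)
  · intro C D hC hD
    constructor
    · exact iso_forward Φ hΦ0 hgen S Φ' hΦ'0 S' C D hC hD
    · rintro ⟨f, hfΦ, hfS⟩
      exact iso_backward Φ S Φ' S' C D hC hD f hfΦ hfS
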